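/- Let V, Q be real Hilbert spaces, a : V × V → ℝ a continuous symmetric bilinear form, k : Q × Q → ℝ and b : V × Q → ℝ continuous bilinear forms, and f : ℝ → V*, g : ℝ → Q* continuous. Suppose u : ℝ → V is continuously differentiable on [0,T] with derivative u', p : ℝ → Q is continuous on [0,T], and for every t ∈ [0,T]: a(u(t),v) − b(v,p(t)) = f(t)(v) for all v ∈ V and b(u'(t),q) + k(p(t),q) = g(t)(q) for all q ∈ Q. Then for every t ∈ [0,T]: ½ a(u(t),u(t)) + ∫₀ᵗ k(p(s),p(s)) ds = ½ a(u(0),u(0)) + ∫₀ᵗ [ f(s)(u'(s)) + g(s)(p(s)) ] ds. -/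

import Mathlib

set_option maxHeartbeats 1000000


/-- Integrated energy identity. If `(u, p)` is a continuously differentiable /
continuous solution of the abstract Biot system on `[0, T]` with continuous data `f`, `g`,
then for every `t ∈ [0, T]`:
`½ a(u(t),u(t)) + ∫₀ᵗ k(p(s),p(s)) ds = ½ a(u(0),u(0)) + ∫₀ᵗ (f(s)(u'(s)) + g(s)(p(s))) ds`. -/
theorem stmt_5 {V Q : Type*} [NormedAddCommGroup V] [InnerProductSpace ℝ V] [CompleteSpace V]
    [NormedAddCommGroup Q] [InnerProductSpace ℝ Q] [CompleteSpace Q]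
    (a : V →ₗ[ℝ] V →ₗ[ℝ] ℝ) (k : Q →ₗ[ℝ] Q →ₗ[ℝ] ℝ) (b : V →ₗ[ℝ] Q →ₗ[ℝ] ℝ)
    (Ca Ck Cb : ℝ)
    (hsymm : ∀ u v : V, a u v = a v u)
    (ha : ∀ u v : V, |a u v| ≤ Ca * ‖u‖ * ‖v‖)
    (hk : ∀ p q : Q, |k p q| ≤ Ck * ‖p‖ * ‖q‖)
    (hb : ∀ (v : V) (q : Q), |b v q| ≤ Cb * ‖v‖ * ‖q‖)
    (T : ℝ) (hT : 0 ≤ T)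
    (f : ℝ → V →L[ℝ] ℝ) (g : ℝ → Q →L[ℝ] ℝ) (hf : Continuous f) (hg : Continuous g)
    (u u' : ℝ → V) (p : ℝ → Q)
    (hu : ∀ t ∈ Set.Icc (0 : ℝ) T, HasDerivAt u (u' t) t)
    (hu' : ContinuousOn u' (Set.Icc (0 : ℝ) T))
    (hp : ContinuousOn p (Set.Icc (0 : ℝ) T))
    (heq1 : ∀ t ∈ Set.Icc (0 : ℝ) T, ∀ v : V, a (u t) v - b v (p t) = f t v)
    (heq2 : ∀ t ∈ Set.Icc (0 : ℝ) T, ∀ q : Q, b (u' t) q + k (p t) q = g t q) :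
    ∀ t ∈ Set.Icc (0 : ℝ) T,
      (1 / 2) * a (u t) (u t) + ∫ s in (0 : ℝ)..t, k (p s) (p s)
        = (1 / 2) * a (u 0) (u 0) + ∫ s in (0 : ℝ)..t, (f s (u' s) + g s (p s)) := by

  intro t ht
  obtain ⟨ht0, htT⟩ := ht
  have hsub : Set.Icc (0:ℝ) t ⊆ Set.Icc 0 T := Set.Icc_subset_Icc le_rfl htT
  -- continuous versions of the bilinear forms
  have ha' : ∀ x y : V, ‖a x y‖ ≤ Ca * ‖x‖ * ‖y‖ := fun x y => by
    simpa [Real.norm_eq_abs] using ha x y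
  have hk' : ∀ x y : Q, ‖k x y‖ ≤ Ck * ‖x‖ * ‖y‖ := fun x y => by
    simpa [Real.norm_eq_abs] using hk x y
  set A : V →L[ℝ] V →L[ℝ] ℝ := LinearMap.mkContinuous₂ a Ca ha' with hA
  set K : Q →L[ℝ] Q →L[ℝ] ℝ := LinearMap.mkContinuous₂ k Ck hk' with hK
  have hAa : ∀ x y : V, A x y = a x y := fun x y => rfl
  have hKk : ∀ x y : Q, K x y = k x y := fun x y => rfl
  -- continuity of integrands
  have hcu : ContinuousOn u (Set.Icc (0:ℝ) T) := fun s hs =>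
    (hu s hs).continuousAt.continuousWithinAt
  have hck : ContinuousOn (fun s => k (p s) (p s)) (Set.Icc (0:ℝ) T) := by
    have : ContinuousOn (fun s => K (p s) (p s)) (Set.Icc (0:ℝ) T) :=
      (K.continuous.comp_continuousOn hp).clm_apply hp
    simpa [hKk] using this
  have hcfg : ContinuousOn (fun s => f s (u' s) + g s (p s)) (Set.Icc (0:ℝ) T) :=
    (hf.continuousOn.clm_apply hu').add (hg.continuousOn.clm_apply hp)
  -- derivative of the energy
  have hE : ∀ s ∈ Set.Icc (0:ℝ) t,
      HasDerivAt (fun s => (1/2) * a (u s) (u s))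
        (f s (u' s) + g s (p s) - k (p s) (p s)) s := by
    intro s hs
    have hs' := hsub hs
    have hbil := (A.isBoundedBilinearMap.hasFDerivAt (u s, u s)).comp_hasDerivAt s
      (HasDerivAt.prodMk (hu s hs') (hu s hs'))
    have hval : A.isBoundedBilinearMap.deriv (u s, u s) (u' s, u' s)
        = 2 * a (u s) (u' s) := by
      rw [IsBoundedBilinearMap.deriv_apply]
      simp only [hAa]
      rw [hsymm (u' s) (u s)]
      ring
    rw [hval] at hbil
    have h2 := hbil.const_mul (1/2 : ℝ)
    have heq : (1/2 : ℝ) * (2 * a (u s) (u' s))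
        = f s (u' s) + g s (p s) - k (p s) (p s) := by
      have e1 := heq1 s hs' (u' s)
      have e2 := heq2 s hs' (p s)
      linarith [e1, e2]
    rw [heq] at h2
    exact h2
  -- FTC
  have hint : IntervalIntegrable (fun s => f s (u' s) + g s (p s) - k (p s) (p s))
      MeasureTheory.volume 0 t := by
    apply ContinuousOn.intervalIntegrable
    apply ContinuousOn.mono ((hcfg.sub hck))
    rw [Set.uIcc_of_le ht0]
    exact hsub
  have hftc := intervalIntegral.integral_eq_sub_of_hasDerivAt
    (f := fun s => (1/2) * a (u s) (u s))
    (by rw [Set.uIcc_of_le ht0]; exact hE) hint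
  have hint1 : IntervalIntegrable (fun s => f s (u' s) + g s (p s))
      MeasureTheory.volume 0 t := by
    apply ContinuousOn.intervalIntegrable
    apply hcfg.mono
    rw [Set.uIcc_of_le ht0]; exact hsub
  have hint2 : IntervalIntegrable (fun s => k (p s) (p s))
      MeasureTheory.volume 0 t := by
    apply ContinuousOn.intervalIntegrable
    apply hck.mono
    rw [Set.uIcc_of_le ht0]; exact hsub
  rw [intervalIntegral.integral_sub hint1 hint2] at hftc
  linarith [hftc]
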